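/- Define f_n : ℝ₊ → ℂ by f_n(e) = (⌈e⌉)^{−(n+1)}(⌈e⌉ − e − i⌈e⌉^{−1})^{−1} for e ≥ 1 and f_n(e) = ie for 0 ≤ e < 1, where n ≥ 1. Then f_n ∈ L²(ℝ₊) and ∫_{ℝ₊} e^{2n}|f_n(e)|² de = ∞ (i.e., f_n ∉ Dom(êⁿ)), but ∫_{ℝ₊} e^{2n}(1 − cos(2πe))|f_n(e)|² de < ∞. -/

import Mathlib

open MeasureTheory Set

/-- The form factor `f_n(e) = ⌈e⌉^{−(n+1)}(⌈e⌉ − e − i⌈e⌉^{−1})^{−1}` for `e ≥ 1`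
and `f_n(e) = ie` for `0 ≤ e < 1`. -/
noncomputable def fAux (n : ℕ) (e : ℝ) : ℂ :=
  if e < 1 then Complex.I * (e : ℂ)
  else ((⌈e⌉ : ℂ) ^ (n + 1) * ((⌈e⌉ : ℂ) - (e : ℂ) - Complex.I * (⌈e⌉ : ℂ)⁻¹))⁻¹

lemma normSq_aux (a b : ℝ) : ‖(a : ℂ) - Complex.I * (b : ℂ)‖ ^ 2 = a ^ 2 + b ^ 2 := by
  rw [Complex.sq_norm, Complex.normSq_apply]
  simp
  ring

lemma ceil_aux {N : ℕ} {e : ℝ} (h1 : (N : ℝ) < e) (h2 : e ≤ (N : ℝ) + 1) :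
    (⌈e⌉ : ℝ) = (N : ℝ) + 1 := by
  have h : ⌈e⌉ = (N : ℤ) + 1 := by
    rw [Int.ceil_eq_iff]
    constructor <;> push_cast <;> linarith
  rw [h]; push_cast; ring

lemma fAux_norm_sq (n N : ℕ) {e : ℝ} (h1 : (N : ℝ) < e) (h2 : e ≤ (N : ℝ) + 1)
    (h3 : 1 ≤ e) :
    ‖fAux n e‖ ^ 2 =
      ((((N : ℝ) + 1) ^ (n + 1)) ^ 2 *
        ((((N : ℝ) + 1) - e) ^ 2 + ((((N : ℝ) + 1))⁻¹) ^ 2))⁻¹ := by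
  have hc : (⌈e⌉ : ℝ) = (N : ℝ) + 1 := ceil_aux h1 h2
  set M : ℝ := (N : ℝ) + 1 with hMdef
  have hM0 : 0 < M := by positivity
  have hcC : (⌈e⌉ : ℂ) = (M : ℂ) := by
    rw [show ((⌈e⌉ : ℤ) : ℂ) = ((⌈e⌉ : ℝ) : ℂ) by push_cast; ring, hc]
  have hw : (M : ℂ) - (e : ℂ) - Complex.I * ((M : ℂ))⁻¹
      = ((M - e : ℝ) : ℂ) - Complex.I * ((M⁻¹ : ℝ) : ℂ) := by
    push_cast; ring
  rw [fAux, if_neg (not_lt.mpr h3), hcC, hw, norm_inv, norm_mul, inv_pow, mul_pow,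
    norm_pow, normSq_aux]
  have hnM : ‖(M : ℂ)‖ = M := by
    rw [Complex.norm_real, Real.norm_eq_abs, abs_of_pos hM0]
  rw [hnM]

lemma fAux_norm_sq_lt_one (n : ℕ) {e : ℝ} (h : e < 1) : ‖fAux n e‖ ^ 2 = e ^ 2 := by
  rw [fAux, if_pos h, norm_mul, Complex.norm_I, one_mul, Complex.norm_real,
    Real.norm_eq_abs, sq_abs]

lemma Ioi_eq_iUnion : Ioi (0 : ℝ) = ⋃ N : ℕ, Ioc (N : ℝ) ((N : ℝ) + 1) := by
  ext e
  simp only [mem_Ioi, mem_iUnion, mem_Ioc]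
  constructor
  · intro he
    have hpos : 0 < ⌈e⌉ := Int.ceil_pos.mpr he
    have hcast : ((⌈e⌉.toNat : ℝ)) = ((⌈e⌉ : ℝ)) := by
      exact_mod_cast Int.toNat_of_nonneg hpos.le
    have h1 : ((⌈e⌉.toNat - 1 : ℕ) : ℝ) = (⌈e⌉ : ℝ) - 1 := by
      rw [Nat.cast_sub (by omega : 1 ≤ ⌈e⌉.toNat), hcast, Nat.cast_one]
    refine ⟨⌈e⌉.toNat - 1, ?_, ?_⟩
    · rw [h1]
      have := Int.ceil_lt_add_one e
      linarith
    · rw [h1]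
      have := Int.le_ceil e
      linarith
  · rintro ⟨N, hN1, _⟩
    exact lt_of_le_of_lt (Nat.cast_nonneg N) hN1

lemma pairwise_disjoint_aux :
    Pairwise (Function.onFun Disjoint fun N : ℕ => Ioc (N : ℝ) ((N : ℝ) + 1)) := by
  intro i j hij
  simp only [Function.onFun]
  rw [Set.disjoint_left]
  rintro x ⟨hi1, hi2⟩ ⟨hj1, hj2⟩
  apply hij
  have h1 : i < j + 1 := by exact_mod_cast hi1.trans_le hj2
  have h2 : j < i + 1 := by exact_mod_cast hj1.trans_le hi2
  omega

lemma lintegral_Ioi_eq (g : ℝ → ENNReal) :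
    ∫⁻ e in Ioi (0 : ℝ), g e = ∑' N : ℕ, ∫⁻ e in Ioc (N : ℝ) ((N : ℝ) + 1), g e := by
  rw [Ioi_eq_iUnion, lintegral_iUnion (fun N => measurableSet_Ioc) pairwise_disjoint_aux]

lemma summable_aux : Summable (fun N : ℕ => (((N : ℝ) + 1) ^ 2)⁻¹) := by
  have h2 : Summable (fun n : ℕ => 1 / (n : ℝ) ^ 2) :=
    Real.summable_one_div_nat_pow.mpr one_lt_two
  have h3 := (_root_.summable_nat_add_iff 1).mpr h2
  exact h3.congr fun N => by push_cast; rw [one_div]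

/-- Pointwise bound for Part 1. -/
lemma bound1 (n N : ℕ) (hn : 1 ≤ n) {e : ℝ} (h1 : (N : ℝ) < e) (h2 : e ≤ (N : ℝ) + 1) :
    ‖fAux n e‖ ^ 2 ≤ (((N : ℝ) + 1) ^ 2)⁻¹ := by
  have he0 : 0 < e := lt_of_le_of_lt (Nat.cast_nonneg N) h1
  by_cases hlt : e < 1
  · have hN : N = 0 := by
      by_contra hN
      have : (1 : ℝ) ≤ (N : ℝ) := by exact_mod_cast Nat.one_le_iff_ne_zero.mpr hN
      linarith
    subst hN
    rw [fAux_norm_sq_lt_one n hlt]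
    rw [show ((((0:ℕ):ℝ) + 1) ^ 2)⁻¹ = 1 by norm_num]
    nlinarith
  · push_neg at hlt
    rw [fAux_norm_sq n N h1 h2 hlt]
    set M : ℝ := (N : ℝ) + 1 with hMdef
    have hM1 : 1 ≤ M := by
      have := Nat.cast_nonneg (α := ℝ) N
      simp only [hMdef]; linarith
    have hM0 : (0 : ℝ) < M := by linarith
    have hpow : M ^ 2 ≤ M ^ (2 * n) := pow_le_pow_right₀ hM1 (by omega)
    have heq : (M ^ (n + 1)) ^ 2 * (M⁻¹) ^ 2 = M ^ (2 * n) := by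
      field_simp
      ring
    apply inv_anti₀ (by positivity)
    nlinarith [mul_nonneg (sq_nonneg (M ^ (n + 1))) (sq_nonneg (M - e))]

/-- Pointwise bound for Part 3. -/
lemma bound3 (n N : ℕ) {e : ℝ} (h1 : (N : ℝ) < e) (h2 : e ≤ (N : ℝ) + 1) :
    e ^ (2 * n) * (1 - Real.cos (2 * Real.pi * e)) * ‖fAux n e‖ ^ 2
      ≤ 2 * Real.pi ^ 2 * (((N : ℝ) + 1) ^ 2)⁻¹ := by
  have he0 : 0 < e := lt_of_le_of_lt (Nat.cast_nonneg N) h1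
  have hπ : (3 : ℝ) < Real.pi := Real.pi_gt_three
  by_cases hlt : e < 1
  · have hN : N = 0 := by
      by_contra hN
      have : (1 : ℝ) ≤ (N : ℝ) := by exact_mod_cast Nat.one_le_iff_ne_zero.mpr hN
      linarith
    subst hN
    rw [fAux_norm_sq_lt_one n hlt]
    rw [show ((((0:ℕ):ℝ) + 1) ^ 2)⁻¹ = 1 by norm_num, mul_one]
    have hp1 : e ^ (2 * n) ≤ 1 := pow_le_one₀ he0.le hlt.le
    have hp0 : (0 : ℝ) ≤ e ^ (2 * n) := by positivity
    have hc1 : Real.cos (2 * Real.pi * e) ≤ 1 := Real.cos_le_one _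
    have hc2 : -1 ≤ Real.cos (2 * Real.pi * e) := Real.neg_one_le_cos _
    have hc0' : (0:ℝ) ≤ 1 - Real.cos (2 * Real.pi * e) := by linarith
    have hA : e ^ (2 * n) * (1 - Real.cos (2 * Real.pi * e)) ≤ 2 := by
      nlinarith [mul_le_mul_of_nonneg_right hp1 hc0']
    have ha0 : (0:ℝ) ≤ e ^ (2 * n) * (1 - Real.cos (2 * Real.pi * e)) :=
      mul_nonneg hp0 hc0'
    have he2 : e ^ 2 ≤ 1 := by nlinarith
    have hB : e ^ (2 * n) * (1 - Real.cos (2 * Real.pi * e)) * e ^ 2 ≤ 2 :=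
      le_trans (mul_le_of_le_one_right ha0 he2) hA
    nlinarith [hB]
  · push_neg at hlt
    rw [fAux_norm_sq n N h1 h2 hlt]
    set M : ℝ := (N : ℝ) + 1 with hMdef
    have hM1 : 1 ≤ M := by
      have := Nat.cast_nonneg (α := ℝ) N
      simp only [hMdef]; linarith
    have hM0 : (0 : ℝ) < M := by linarith
    have hcos : Real.cos (2 * Real.pi * e) = Real.cos (2 * Real.pi * (M - e)) := by
      have h := Real.cos_nat_mul_two_pi_sub (2 * Real.pi * e) (N + 1)
      rw [← h]
      congr 1
      push_cast
      simp only [hMdef]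
      ring
    have hub : 1 - Real.cos (2 * Real.pi * e) ≤ 2 * Real.pi ^ 2 * (M - e) ^ 2 := by
      rw [hcos, show 2 * Real.pi ^ 2 * (M - e) ^ 2
        = (2 * Real.pi * (M - e)) ^ 2 / 2 by ring]
      linarith [Real.one_sub_sq_div_two_le_cos (x := 2 * Real.pi * (M - e))]
    have hcos0 : 0 ≤ 1 - Real.cos (2 * Real.pi * e) := by
      have := Real.cos_le_one (2 * Real.pi * e); linarith
    have hepow : e ^ (2 * n) ≤ M ^ (2 * n) := pow_le_pow_left₀ he0.le h2 _
    have hP : (0 : ℝ) < (M ^ (n + 1)) ^ 2 * ((M - e) ^ 2 + (M⁻¹) ^ 2) := by positivity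
    have hM2 : (0 : ℝ) < M ^ 2 := by positivity
    rw [← div_eq_mul_inv, ← div_eq_mul_inv, div_le_div_iff₀ hP hM2]
    calc e ^ (2 * n) * (1 - Real.cos (2 * Real.pi * e)) * M ^ 2
        ≤ M ^ (2 * n) * (2 * Real.pi ^ 2 * (M - e) ^ 2) * M ^ 2 := by
          apply mul_le_mul_of_nonneg_right _ (sq_nonneg M)
          exact mul_le_mul hepow hub hcos0 (by positivity)
      _ ≤ 2 * Real.pi ^ 2 * ((M ^ (n + 1)) ^ 2 * ((M - e) ^ 2 + (M⁻¹) ^ 2)) := by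
          have h4 : ((M ^ (n + 1)) : ℝ) ^ 2 = M ^ (2 * n) * M ^ 2 := by ring
          rw [h4]
          have h5 : (0 : ℝ) ≤ 2 * Real.pi ^ 2 * (M ^ (2 * n) * M ^ 2) * (M⁻¹) ^ 2 := by
            positivity
          nlinarith [h5]

/-- Pointwise lower bound for Part 2 on the small interval. -/
lemma bound2 (n N : ℕ) {e : ℝ}
    (he1 : ((N : ℝ) + 1) - 1 / (2 * ((N : ℝ) + 1)) < e) (he2 : e ≤ (N : ℝ) + 1) :
    ((1 : ℝ) / 2) ^ (2 * n + 2) ≤ e ^ (2 * n) * ‖fAux n e‖ ^ 2 := by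
  set M : ℝ := (N : ℝ) + 1 with hMdef
  have hM1 : 1 ≤ M := by
    have := Nat.cast_nonneg (α := ℝ) N
    simp only [hMdef]; linarith
  have hM0 : (0 : ℝ) < M := by linarith
  have hhalf : M / 2 ≤ M - 1 / (2 * M) := by
    rw [div_le_iff₀ (by norm_num : (0:ℝ) < 2)] at *
    have h1 : 1 / (2 * M) ≤ M / 2 := by
      rw [div_le_div_iff₀ (by positivity) (by norm_num)]
      nlinarith
    linarith [h1]
  have heM2 : M / 2 ≤ e := le_trans hhalf he1.le
  have he0 : (0 : ℝ) < e := lt_of_lt_of_le (by positivity) heM2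
  have hNe : (N : ℝ) < e := by
    have h1 : 1 / (2 * M) ≤ 1 := by
      rw [div_le_one (by positivity)]; linarith
    have : (N : ℝ) ≤ M - 1 / (2 * M) := by
      simp only [hMdef]; linarith
    linarith
  by_cases hlt : e < 1
  · rw [fAux_norm_sq_lt_one n hlt]
    have hhalf_e : (1 : ℝ) / 2 ≤ e := by
      have : (1 : ℝ) / 2 ≤ M / 2 := by linarith
      linarith
    calc ((1 : ℝ) / 2) ^ (2 * n + 2) ≤ e ^ (2 * n + 2) :=
          pow_le_pow_left₀ (by norm_num) hhalf_e _
      _ = e ^ (2 * n) * e ^ 2 := by ring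
  · push_neg at hlt
    rw [fAux_norm_sq n N hNe he2 hlt]
    have hMe : (M - e) ^ 2 ≤ (M⁻¹) ^ 2 := by
      have h1 : 0 ≤ M - e := by linarith
      have h3 : 1 / (2 * M) ≤ M⁻¹ := by
        rw [one_div]
        exact inv_anti₀ hM0 (by linarith)
      have h2 : M - e ≤ M⁻¹ := by linarith
      exact pow_le_pow_left₀ h1 h2 2
    have hPle : (M ^ (n + 1)) ^ 2 * ((M - e) ^ 2 + (M⁻¹) ^ 2) ≤ 2 * M ^ (2 * n) := by
      have hsum : (M - e) ^ 2 + (M⁻¹) ^ 2 ≤ 2 * (M⁻¹) ^ 2 := by linarith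
      calc (M ^ (n + 1)) ^ 2 * ((M - e) ^ 2 + (M⁻¹) ^ 2)
          ≤ (M ^ (n + 1)) ^ 2 * (2 * (M⁻¹) ^ 2) :=
            mul_le_mul_of_nonneg_left hsum (by positivity)
        _ = 2 * M ^ (2 * n) := by field_simp; ring
    have hP0 : (0 : ℝ) < (M ^ (n + 1)) ^ 2 * ((M - e) ^ 2 + (M⁻¹) ^ 2) := by positivity
    have he_pow : (M / 2) ^ (2 * n) ≤ e ^ (2 * n) :=
      pow_le_pow_left₀ (by positivity) heM2 _
    calc ((1 : ℝ) / 2) ^ (2 * n + 2)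
        ≤ (M / 2) ^ (2 * n) * (2 * M ^ (2 * n))⁻¹ := by
          have heq : (M / 2 : ℝ) ^ (2 * n) * (2 * M ^ (2 * n))⁻¹
              = (1 / 2 : ℝ) ^ (2 * n) * (1 / 2) := by
            field_simp
            ring
          rw [heq]
          have hthis : ((1 : ℝ) / 2) ^ (2 * n + 2)
              = (1 / 2 : ℝ) ^ (2 * n) * ((1 / 2) * (1 / 2)) := by ring
          rw [hthis]
          have hp : (0 : ℝ) ≤ (1 / 2 : ℝ) ^ (2 * n) := by positivity
          nlinarith
      _ ≤ e ^ (2 * n) * ((M ^ (n + 1)) ^ 2 * ((M - e) ^ 2 + (M⁻¹) ^ 2))⁻¹ :=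
          mul_le_mul he_pow (inv_anti₀ hP0 hPle) (by positivity) (by positivity)

/-- For `n ≥ 1`, `f_n ∈ L²(ℝ₊)` and `∫ e^{2n}|f_n|² = ∞`
(so `f_n ∉ Dom(êⁿ)`), but `∫ e^{2n}(1 − cos(2πe))|f_n(e)|² de < ∞`. -/
theorem fAux_counterexample (n : ℕ) (hn : 1 ≤ n) :
    (∫⁻ e in Ioi (0 : ℝ), ENNReal.ofReal (‖fAux n e‖ ^ 2) < ⊤) ∧
    (∫⁻ e in Ioi (0 : ℝ), ENNReal.ofReal (e ^ (2 * n) * ‖fAux n e‖ ^ 2) = ⊤) ∧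
    (∫⁻ e in Ioi (0 : ℝ),
      ENNReal.ofReal (e ^ (2 * n) * (1 - Real.cos (2 * Real.pi * e)) * ‖fAux n e‖ ^ 2) < ⊤) := by
  have hvol : ∀ N : ℕ, volume (Ioc (N : ℝ) ((N : ℝ) + 1)) = 1 := by
    intro N
    rw [Real.volume_Ioc]
    norm_num
  refine ⟨?_, ?_, ?_⟩
  · -- part 1
    rw [lintegral_Ioi_eq]
    have key : ∀ N : ℕ, ∫⁻ e in Ioc (N : ℝ) ((N : ℝ) + 1), ENNReal.ofReal (‖fAux n e‖ ^ 2)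
        ≤ ENNReal.ofReal ((((N : ℝ) + 1) ^ 2)⁻¹) := by
      intro N
      calc ∫⁻ e in Ioc (N : ℝ) ((N : ℝ) + 1), ENNReal.ofReal (‖fAux n e‖ ^ 2)
          ≤ ∫⁻ _ in Ioc (N : ℝ) ((N : ℝ) + 1), ENNReal.ofReal ((((N : ℝ) + 1) ^ 2)⁻¹) :=
            setLIntegral_mono' measurableSet_Ioc fun e he =>
              ENNReal.ofReal_le_ofReal (bound1 n N hn he.1 he.2)
        _ = ENNReal.ofReal ((((N : ℝ) + 1) ^ 2)⁻¹) := by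
            rw [setLIntegral_const, hvol N, mul_one]
    refine lt_of_le_of_lt (ENNReal.tsum_le_tsum key) ?_
    rw [← ENNReal.ofReal_tsum_of_nonneg (fun N => by positivity) summable_aux]
    exact ENNReal.ofReal_lt_top
  · -- part 2
    rw [lintegral_Ioi_eq, eq_top_iff]
    set c : ℝ := (1 / 2 : ℝ) ^ (2 * n + 2) with hcdef
    have hc0 : 0 < c := by positivity
    have key : ∀ N : ℕ, ENNReal.ofReal (c * (1 / (2 * ((N : ℝ) + 1))))
        ≤ ∫⁻ e in Ioc (N : ℝ) ((N : ℝ) + 1),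
            ENNReal.ofReal (e ^ (2 * n) * ‖fAux n e‖ ^ 2) := by
      intro N
      set M : ℝ := (N : ℝ) + 1 with hMdef
      have hM1 : 1 ≤ M := by
        have := Nat.cast_nonneg (α := ℝ) N
        simp only [hMdef]; linarith
      have hM0 : (0 : ℝ) < M := by linarith
      have hsub : Ioc (M - 1 / (2 * M)) M ⊆ Ioc (N : ℝ) M := by
        apply Ioc_subset_Ioc_left
        have h1 : 1 / (2 * M) ≤ 1 := by
          rw [div_le_one (by positivity)]; linarith
        simp only [hMdef]; linarith
      have hvolJ : volume (Ioc (M - 1 / (2 * M)) M) = ENNReal.ofReal (1 / (2 * M)) := by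
        rw [Real.volume_Ioc]
        congr 1
        ring
      calc ENNReal.ofReal (c * (1 / (2 * M)))
          = ENNReal.ofReal c * ENNReal.ofReal (1 / (2 * M)) := ENNReal.ofReal_mul hc0.le
        _ = ∫⁻ _ in Ioc (M - 1 / (2 * M)) M, ENNReal.ofReal c := by
            rw [setLIntegral_const, hvolJ]
        _ ≤ ∫⁻ e in Ioc (M - 1 / (2 * M)) M,
              ENNReal.ofReal (e ^ (2 * n) * ‖fAux n e‖ ^ 2) :=
            setLIntegral_mono' measurableSet_Ioc fun e he =>
              ENNReal.ofReal_le_ofReal (bound2 n N he.1 he.2)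
        _ ≤ _ := lintegral_mono_set hsub
    have hdiv : ∑' N : ℕ, ENNReal.ofReal (c * (1 / (2 * ((N : ℝ) + 1)))) = ⊤ := by
      by_contra h
      simp only [ENNReal.ofReal] at h
      have hsum := ENNReal.tsum_coe_ne_top_iff_summable.mp h
      have hsumR : Summable (fun N : ℕ => c * (1 / (2 * ((N : ℝ) + 1)))) := by
        have hcoe := NNReal.summable_coe.mpr hsum
        refine hcoe.congr fun N => ?_
        rw [Real.coe_toNNReal _ (by positivity)]
      have hs2 : Summable (fun N : ℕ => 1 / ((N : ℝ) + 1)) := by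
        have h2 := hsumR.mul_left (2 / c)
        refine h2.congr fun N => ?_
        field_simp
      have hs3 : Summable (fun m : ℕ => 1 / ((m : ℝ))) := by
        apply (_root_.summable_nat_add_iff 1).mp
        exact hs2.congr fun N => by push_cast; ring
      exact Real.not_summable_one_div_natCast hs3
    exact le_trans (le_of_eq hdiv.symm) (ENNReal.tsum_le_tsum key)
  · -- part 3
    rw [lintegral_Ioi_eq]
    have key : ∀ N : ℕ, ∫⁻ e in Ioc (N : ℝ) ((N : ℝ) + 1),
        ENNReal.ofReal (e ^ (2 * n) * (1 - Real.cos (2 * Real.pi * e)) * ‖fAux n e‖ ^ 2)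
        ≤ ENNReal.ofReal (2 * Real.pi ^ 2 * (((N : ℝ) + 1) ^ 2)⁻¹) := by
      intro N
      calc ∫⁻ e in Ioc (N : ℝ) ((N : ℝ) + 1),
            ENNReal.ofReal (e ^ (2 * n) * (1 - Real.cos (2 * Real.pi * e)) * ‖fAux n e‖ ^ 2)
          ≤ ∫⁻ _ in Ioc (N : ℝ) ((N : ℝ) + 1),
              ENNReal.ofReal (2 * Real.pi ^ 2 * (((N : ℝ) + 1) ^ 2)⁻¹) :=
            setLIntegral_mono' measurableSet_Ioc fun e he =>
              ENNReal.ofReal_le_ofReal (bound3 n N he.1 he.2)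
        _ = ENNReal.ofReal (2 * Real.pi ^ 2 * (((N : ℝ) + 1) ^ 2)⁻¹) := by
            rw [setLIntegral_const, hvol N, mul_one]
    refine lt_of_le_of_lt (ENNReal.tsum_le_tsum key) ?_
    rw [← ENNReal.ofReal_tsum_of_nonneg (fun N => by positivity)
      (summable_aux.mul_left (2 * Real.pi ^ 2))]
    exact ENNReal.ofReal_lt_top
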